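/- Let X be the stationary first-order Gaussian autoregressive process defined by X_n = a·X_{n−1} + Z_n, where a ∈ (0,1) and the Z_n are i.i.d. zero-mean Gaussian with variance σ² > 0, so that X is a stationary zero-mean Gaussian Markov process with marginal variance σ²/(1−a²). Let Y_n = |X_n|. Then the output process Y is a Markov process. -/

import Mathlib

open MeasureTheory ProbabilityTheory Filter Real Set

noncomputable section

/-- Base-2 entropy of a measure (meaningful for measures with countable support). -/
def mEnt {γ : Type*} [MeasurableSpace γ] (ν : Measure γ) : ℝ :=
  ∑' y : γ, -((ν {y}).toReal * Real.logb 2 ((ν {y}).toReal))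

/-- Base-2 Shannon entropy of a random variable. -/
def rvEnt {Ω γ : Type*} [MeasurableSpace Ω] [MeasurableSpace γ]
    (μ : Measure Ω) (A : Ω → γ) : ℝ :=
  mEnt (μ.map A)

/-- Conditional (base-2) Shannon entropy of `A` given `B`. -/
def condEnt {Ω γ β : Type*} [MeasurableSpace Ω] [MeasurableSpace γ]
    [StandardBorelSpace γ] [Nonempty γ] [MeasurableSpace β]
    (μ : Measure Ω) [IsFiniteMeasure μ] (A : Ω → γ) (B : Ω → β) : ℝ :=
  ∫ b, mEnt (condDistrib A B μ b) ∂(μ.map B)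

/-- Dyadic quantization at resolution `2^{-k}`. -/
def qt (k : ℕ) (x : ℝ) : ℝ := ⌊(2 : ℝ) ^ k * x⌋ / 2 ^ k

/-- The block `(X_1, …, X_n)` of a process. -/
def blk {Ω α : Type*} (X : ℕ → Ω → α) (n : ℕ) (ω : Ω) : Fin n → α :=
  fun i => X (i + 1) ω

/-- The dyadically quantized block. -/
def qblk {Ω : Type*} (X : ℕ → Ω → ℝ) (n k : ℕ) (ω : Ω) : Fin n → ℝ :=
  fun i => qt k (X (i + 1) ω)

/-- Strict stationarity of a real-valued process. -/
def Stationary {Ω : Type*} [MeasurableSpace Ω] (μ : Measure Ω) (X : ℕ → Ω → ℝ) : Prop :=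
  ∀ n k : ℕ, μ.map (fun ω => fun i : Fin n => X (i + 1 + k) ω) = μ.map (blk X n)

/-- Base-2 differential entropy of a measure wrt the volume measure. -/
def dEnt {E : Type*} [MeasureSpace E] (ν : Measure E) : ℝ :=
  -∫ x, (ν.rnDeriv volume x).toReal * Real.logb 2 ((ν.rnDeriv volume x).toReal)

/-- The differential entropy of `ν` is finite (the integrand is integrable). -/
def HasFiniteDEnt {E : Type*} [MeasureSpace E] (ν : Measure E) : Prop :=
  Integrable (fun x => (ν.rnDeriv volume x).toReal * Real.logb 2 ((ν.rnDeriv volume x).toReal))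
    (volume : Measure E)

/-- A piecewise bijective function (Definition 1). -/
structure PBF where
  dom : Set ℝ
  part : ℕ → Set ℝ
  toFun : ℝ → ℝ
  deriv : ℝ → ℝ
  measurable_toFun : Measurable toFun
  pairwise_disjoint : Pairwise (Function.onFun Disjoint part)
  cover : (⋃ i, part i) = dom
  injOn : ∀ i, Set.InjOn toFun (part i)
  hasDeriv : ∀ i, ∀ x ∈ closure (part i), HasDerivWithinAt toFun (deriv x) (closure (part i)) x

/-- The (homogeneous, first-order) Markov property for a process indexed from 1. -/
def IsMarkov {Ω : Type*} [MeasurableSpace Ω] (μ : Measure Ω) (X : ℕ → Ω → ℝ) : Prop :=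
  ∀ n : ℕ, 1 ≤ n → ∀ s : Set ℝ, MeasurableSet s →
    (μ[(X (n + 1) ⁻¹' s).indicator (fun _ => (1 : ℝ)) |
        MeasurableSpace.comap (blk X n) inferInstance])
      =ᵐ[μ]
    (μ[(X (n + 1) ⁻¹' s).indicator (fun _ => (1 : ℝ)) |
        MeasurableSpace.comap (X n) inferInstance])


/-- Helper: indicator of a preimage as composition. -/
lemma ind_comp {α β : Type*} (g : α → β) (T : Set β) (c : ℝ) (x : α) :
    (g ⁻¹' T).indicator (fun _ => c) x = T.indicator (fun _ => c) (g x) := by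
  by_cases h : g x ∈ T <;> simp [Set.indicator_apply, h]

/-- The magnitude of a stationary Gaussian AR(1) process is Markov.
Let `X` be the stationary first-order Gaussian autoregressive process
`X_{n+1} = a·X_n + Z_{n+1}` with `a ∈ (0,1)` and `Z_n` i.i.d. zero-mean Gaussian
with variance `σ² > 0` (each innovation independent of the past), so that `X` is
a stationary zero-mean Gaussian Markov process with marginal variance
`σ²/(1−a²)`. Then the output process `Y_n = |X_n|` is a Markov process. -/
theorem ar1_abs_isMarkov
    {Ω : Type*} [MeasurableSpace Ω] (μ : Measure Ω) [IsProbabilityMeasure μ]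
    (a : ℝ) (ha : a ∈ Set.Ioo (0 : ℝ) 1)
    (σ2 : NNReal) (hσ2 : 0 < σ2)
    (X Z : ℕ → Ω → ℝ)
    (hXmeas : ∀ n, Measurable (X n)) (hZmeas : ∀ n, Measurable (Z n))
    -- the AR(1) recursion
    (hrec : ∀ n ω, X (n + 1) ω = a * X n ω + Z (n + 1) ω)
    -- the innovations are i.i.d. zero-mean Gaussian with variance σ²
    (hZdist : ∀ n, μ.map (Z n) = gaussianReal 0 σ2)
    (hZiid : iIndepFun Z μ)
    -- each innovation is independent of the past of the process
    (hZindep : ∀ n : ℕ, IndepFun (Z (n + 1)) (blk X n) μ)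
    -- X is stationary, zero-mean Gaussian and Markov with marginal variance σ²/(1−a²)
    (hstat : Stationary μ X) (hmarkov : IsMarkov μ X)
    (v : NNReal) (hv : (v : ℝ) = (σ2 : ℝ) / (1 - a ^ 2))
    (hmarg : μ.map (X 1) = gaussianReal 0 v) :
    IsMarkov μ (fun n ω => |X n ω|) := by
  intro n hn s hs
  -- notation
  set ν : Measure ℝ := gaussianReal 0 σ2 with hνdef
  set T : Set ℝ := abs ⁻¹' s with hTdef
  have hTmeas : MeasurableSet T := measurable_abs hs
  have hTsym : ∀ t : ℝ, -t ∈ T ↔ t ∈ T := by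
    intro t; simp [hTdef, abs_neg]
  have hνprob : IsProbabilityMeasure ν := by infer_instance
  -- symmetry of the Gaussian
  have hνsym : ν.map (fun x : ℝ => -x) = ν := by
    have h1 : (fun x : ℝ => -x) = ((-1 : ℝ) * ·) := by funext x; ring
    rw [hνdef, h1, gaussianReal_map_const_mul]
    norm_num
  -- the conditional probability function
  set h : ℝ → ℝ := fun x => (ν ((fun z => a * x + z) ⁻¹' T)).toReal with hhdef
  have hS2 : MeasurableSet {p : ℝ × ℝ | a * p.1 + p.2 ∈ T} :=
    ((measurable_fst.const_mul a).add measurable_snd) hTmeas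
  have hhmeas : Measurable h := (measurable_measure_prodMk_left (ν := ν) hS2).ennreal_toReal
  have hh01 : ∀ x, 0 ≤ h x ∧ h x ≤ 1 := by
    intro x
    refine ⟨ENNReal.toReal_nonneg, ?_⟩
    calc (ν ((fun z => a * x + z) ⁻¹' T)).toReal
        ≤ (1 : ENNReal).toReal := ENNReal.toReal_mono ENNReal.one_ne_top prob_le_one
      _ = 1 := by simp
  have hpre : ∀ x : ℝ, MeasurableSet ((fun z => a * x + z) ⁻¹' T) := by
    intro x; exact (measurable_id.const_add (a * x)) hTmeas
  have hneg : ∀ x, h (-x) = h x := by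
    intro x
    have hset : (fun z => a * (-x) + z) ⁻¹' T = (fun z : ℝ => -z) ⁻¹' ((fun z => a * x + z) ⁻¹' T) := by
      ext z
      simp only [Set.mem_preimage]
      have he : a * (-x) + z = -(a * x + -z) := by ring
      rw [he, hTsym]
    simp only [hhdef]
    rw [hset, ← Measure.map_apply measurable_neg (hpre x), hνsym]
  have heven : ∀ x, h x = h |x| := by
    intro x
    rcases le_or_gt 0 x with hx | hx
    · rw [abs_of_nonneg hx]
    · rw [abs_of_neg hx, hneg]
  -- last index of the block
  have hnpos : 0 < n := hn
  set lastIdx : Fin n := ⟨n - 1, by omega⟩ with hlastIdx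
  have hidx : (lastIdx : ℕ) + 1 = n := by simp [hlastIdx]; omega
  have hlast : ∀ ω, blk X n ω lastIdx = X n ω := by
    intro ω; simp only [blk]; rw [hidx]
  -- measurability of blocks
  have hB : Measurable (blk X n) := measurable_pi_lambda _ fun i => hXmeas _
  have hBY : Measurable (blk (fun n ω => |X n ω|) n) :=
    measurable_pi_lambda _ fun i => (hXmeas _).abs
  -- the indicator function we condition
  set f : Ω → ℝ := fun ω => T.indicator (fun _ => (1 : ℝ)) (X (n + 1) ω) with hfdef
  have hfind : f = (X (n + 1) ⁻¹' T).indicator (fun _ => (1 : ℝ)) := by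
    funext ω; exact (ind_comp (X (n + 1)) T 1 ω).symm
  have hfint : Integrable f μ := by
    rw [hfind]; exact (integrable_const (1 : ℝ)).indicator ((hXmeas (n + 1)) hTmeas)
  -- the joint function
  set F : (Fin n → ℝ) × ℝ → ℝ := fun p => T.indicator (fun _ => (1 : ℝ)) (a * p.1 lastIdx + p.2)
    with hFdef
  have hgF : Measurable fun p : (Fin n → ℝ) × ℝ => a * p.1 lastIdx + p.2 :=
    by fun_prop
  have hFsm : StronglyMeasurable F := by
    have : F = Set.indicator ((fun p : (Fin n → ℝ) × ℝ => a * p.1 lastIdx + p.2) ⁻¹' T)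
        (fun _ => (1 : ℝ)) := by
      funext p; rw [hFdef]; exact (ind_comp (fun p : (Fin n → ℝ) × ℝ => a * p.1 lastIdx + p.2) T 1 p).symm
    rw [this]
    exact stronglyMeasurable_const.indicator (hgF hTmeas)
  have hfeq : (fun ω => F (blk X n ω, Z (n + 1) ω)) = f := by
    funext ω
    simp only [hFdef, hfdef]
    congr 1
    rw [hlast ω, ← hrec n ω]
  -- Step 1: conditional expectation via condDistrib
  have step1 : μ[f | MeasurableSpace.comap (blk X n) inferInstance] =ᵐ[μ]
      fun ω => ∫ z, F (blk X n ω, z) ∂(condDistrib (Z (n + 1)) (blk X n) μ (blk X n ω)) := by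
    have := condExp_prod_ae_eq_integral_condDistrib (μ := μ) hB (hZmeas (n + 1)).aemeasurable
      hFsm (by rw [hfeq]; exact hfint)
    rwa [hfeq] at this
  -- Step 2: condDistrib is the constant Gaussian kernel, by independence
  haveI : IsProbabilityMeasure (μ.map (blk X n)) := Measure.isProbabilityMeasure_map hB.aemeasurable
  have hjoint : μ.map (fun ω => (blk X n ω, Z (n + 1) ω)) =
      μ.map (blk X n) ⊗ₘ Kernel.const _ ν := by
    rw [Measure.compProd_const]
    have h1 := (indepFun_iff_map_prod_eq_prod_map_map hB.aemeasurable
      (hZmeas (n + 1)).aemeasurable).mp (hZindep n).symm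
    rw [h1, hZdist]
  have step2 : ∀ᵐ ω ∂μ, Kernel.const _ ν (blk X n ω) =
      condDistrib (Z (n + 1)) (blk X n) μ (blk X n ω) :=
    ae_of_ae_map hB.aemeasurable
      (condDistrib_ae_eq_of_measure_eq_compProd_of_measurable hB (hZmeas (n + 1)) (κ := Kernel.const _ ν) hjoint).symm
  -- Key: the conditional expectation given the whole past is h (X n ·)
  have hkey : μ[f | MeasurableSpace.comap (blk X n) inferInstance] =ᵐ[μ]
      fun ω => h (X n ω) := by
    refine step1.trans ?_
    filter_upwards [step2] with ω hω
    rw [← hω, Kernel.const_apply]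
    have hrw : (fun z => F (blk X n ω, z)) =
        (fun z => ((fun z => a * X n ω + z) ⁻¹' T).indicator (fun _ => (1 : ℝ)) z) := by
      funext z
      rw [ind_comp]
      simp only [hFdef]
      rw [hlast ω]
    calc ∫ z, F (blk X n ω, z) ∂ν
        = ∫ z, ((fun z => a * X n ω + z) ⁻¹' T).indicator (fun _ => (1 : ℝ)) z ∂ν := by
          rw [hrw]
      _ = (ν ((fun z => a * X n ω + z) ⁻¹' T)).toReal • (1 : ℝ) :=
          integral_indicator_const (1 : ℝ) (hpre (X n ω))
      _ = h (X n ω) := by simp [hhdef]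
  -- the function h (|X n ·|)
  have hXY : (fun ω => h (X n ω)) = fun ω => h (|X n ω|) := by
    funext ω; exact heven _
  -- σ-algebra inclusions
  have hm1 : MeasurableSpace.comap (blk X n) inferInstance ≤ ‹MeasurableSpace Ω› := hB.comap_le
  have hgabs : Measurable fun (v : Fin n → ℝ) (i : Fin n) => |v i| :=
    measurable_pi_lambda _ fun i => (measurable_pi_apply i).abs
  have hle1 : MeasurableSpace.comap (blk (fun n ω => |X n ω|) n) inferInstance ≤
      MeasurableSpace.comap (blk X n) inferInstance := by
    have hcomp : blk (fun n ω => |X n ω|) n = (fun (v : Fin n → ℝ) (i : Fin n) => |v i|) ∘ blk X n :=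
      rfl
    calc MeasurableSpace.comap (blk (fun n ω => |X n ω|) n) inferInstance
        = MeasurableSpace.comap (blk X n) (MeasurableSpace.comap
            (fun (v : Fin n → ℝ) (i : Fin n) => |v i|) inferInstance) := by
          rw [hcomp, MeasurableSpace.comap_comp]
      _ ≤ MeasurableSpace.comap (blk X n) inferInstance :=
          MeasurableSpace.comap_mono hgabs.comap_le
  -- abs of X n as composition of the abs-block
  have hYcomp : (fun ω => |X n ω|) = (fun v : Fin n → ℝ => v lastIdx) ∘ blk (fun n ω => |X n ω|) n := by
    funext ω
    simp only [Function.comp_apply, blk]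
    rw [hidx]
  -- strong measurability of h(|X n ·|) wrt the two smaller σ-algebras
  have hsm1 : StronglyMeasurable[MeasurableSpace.comap (blk (fun n ω => |X n ω|) n) inferInstance]
      (fun ω => h (|X n ω|)) := by
    have hid : Measurable[MeasurableSpace.comap (blk (fun n ω => |X n ω|) n) inferInstance]
        (blk (fun n ω => |X n ω|) n) := measurable_iff_comap_le.mpr le_rfl
    have : (fun ω => h (|X n ω|)) =
        (fun v : Fin n → ℝ => h (v lastIdx)) ∘ blk (fun n ω => |X n ω|) n := by
      funext ω
      rw [show (|X n ω|) = blk (fun n ω => |X n ω|) n ω lastIdx from congrFun hYcomp ω]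
      rfl
    rw [this]
    exact ((hhmeas.comp (measurable_pi_apply lastIdx)).comp hid).stronglyMeasurable
  have hsm2 : StronglyMeasurable[MeasurableSpace.comap (fun ω => |X n ω|) inferInstance]
      (fun ω => h (|X n ω|)) := by
    have hid : Measurable[MeasurableSpace.comap (fun ω => |X n ω|) inferInstance]
        (fun ω => |X n ω|) := measurable_iff_comap_le.mpr le_rfl
    exact (hhmeas.comp hid).stronglyMeasurable
  have hint : Integrable (fun ω => h (|X n ω|)) μ := by
    refine (integrable_const (1 : ℝ)).mono' (hhmeas.comp (hXmeas n).abs).aestronglyMeasurable ?_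
    filter_upwards with ω
    rw [Real.norm_eq_abs, abs_of_nonneg (hh01 _).1]
    exact (hh01 _).2
  -- the indicator in the statement is f
  have hstind : ((fun ω => |X (n + 1) ω|) ⁻¹' s).indicator (fun _ => (1 : ℝ)) = f := by
    funext ω
    exact ind_comp (X (n + 1)) T 1 ω
  show μ[((fun ω => |X (n + 1) ω|) ⁻¹' s).indicator (fun _ => (1 : ℝ)) |
        MeasurableSpace.comap (blk (fun n ω => |X n ω|) n) inferInstance] =ᵐ[μ]
      μ[((fun ω => |X (n + 1) ω|) ⁻¹' s).indicator (fun _ => (1 : ℝ)) |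
        MeasurableSpace.comap (fun ω => |X n ω|) inferInstance]
  rw [hstind]
  have chain1 : μ[f | MeasurableSpace.comap (blk (fun n ω => |X n ω|) n) inferInstance] =ᵐ[μ]
      fun ω => h (|X n ω|) := by
    calc μ[f | MeasurableSpace.comap (blk (fun n ω => |X n ω|) n) inferInstance]
        =ᵐ[μ] μ[μ[f | MeasurableSpace.comap (blk X n) inferInstance] |
            MeasurableSpace.comap (blk (fun n ω => |X n ω|) n) inferInstance] :=
          (condExp_condExp_of_le hle1 hm1).symm
      _ =ᵐ[μ] μ[(fun ω => h (X n ω)) |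
            MeasurableSpace.comap (blk (fun n ω => |X n ω|) n) inferInstance] :=
          condExp_congr_ae hkey
      _ =ᵐ[μ] fun ω => h (|X n ω|) := by
          rw [hXY, condExp_of_stronglyMeasurable (hle1.trans hm1) hsm1 hint]
  have hle2 : MeasurableSpace.comap (fun ω => |X n ω|) inferInstance ≤
      MeasurableSpace.comap (blk X n) inferInstance := by
    have hcomp : (fun ω => |X n ω|) = (fun x : ℝ => |x|) ∘ X n := rfl
    have hXle : MeasurableSpace.comap (X n) inferInstance ≤
        MeasurableSpace.comap (blk X n) inferInstance := by
      have hcomp2 : X n = (fun v : Fin n → ℝ => v lastIdx) ∘ blk X n := by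
        funext ω; simp only [Function.comp_apply]; exact (hlast ω).symm
      calc MeasurableSpace.comap (X n) inferInstance
          = MeasurableSpace.comap (blk X n)
              (MeasurableSpace.comap (fun v : Fin n → ℝ => v lastIdx) inferInstance) := by
            rw [hcomp2, MeasurableSpace.comap_comp]
        _ ≤ MeasurableSpace.comap (blk X n) inferInstance :=
            MeasurableSpace.comap_mono (measurable_pi_apply lastIdx).comap_le
    calc MeasurableSpace.comap (fun ω => |X n ω|) inferInstance
        = MeasurableSpace.comap (X n)
            (MeasurableSpace.comap (fun x : ℝ => |x|) inferInstance) := by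
          rw [hcomp, MeasurableSpace.comap_comp]
      _ ≤ MeasurableSpace.comap (X n) inferInstance :=
          MeasurableSpace.comap_mono measurable_abs.comap_le
      _ ≤ MeasurableSpace.comap (blk X n) inferInstance := hXle
  have chain2 : μ[f | MeasurableSpace.comap (fun ω => |X n ω|) inferInstance] =ᵐ[μ]
      fun ω => h (|X n ω|) := by
    calc μ[f | MeasurableSpace.comap (fun ω => |X n ω|) inferInstance]
        =ᵐ[μ] μ[μ[f | MeasurableSpace.comap (blk X n) inferInstance] |
            MeasurableSpace.comap (fun ω => |X n ω|) inferInstance] :=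
          (condExp_condExp_of_le hle2 hm1).symm
      _ =ᵐ[μ] μ[(fun ω => h (X n ω)) |
            MeasurableSpace.comap (fun ω => |X n ω|) inferInstance] :=
          condExp_congr_ae hkey
      _ =ᵐ[μ] fun ω => h (|X n ω|) := by
          rw [hXY, condExp_of_stronglyMeasurable (hle2.trans hm1) hsm2 hint]
  exact chain1.trans chain2.symm
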